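/- For all a, b ∈ ℂ with b ≠ 0 and every integer N ≥ 1, the set Per_N(a,b) = {p ∈ ℂ² : f_{a,b}^N(p) = p} of periodic points of the Hénon map whose period divides N is finite. -/

import Mathlib

noncomputable section

/-- The complex Hénon map `f_{a,b}(x,y) = (x² + a − b y, x)`. -/
def henonMap (a b : ℂ) : ℂ × ℂ → ℂ × ℂ :=
  fun p => (p.1 ^ 2 + a - b * p.2, p.1)

/-- For `b ≠ 0`, the Hénon map `f_{a,b}` as a bijection of `ℂ²`. -/
def henon (a b : ℂ) (hb : b ≠ 0) : Equiv.Perm (ℂ × ℂ) where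
  toFun := henonMap a b
  invFun p := (p.2, (p.2 ^ 2 + a - p.1) / b)
  left_inv p := by
    obtain ⟨x, y⟩ := p
    simp only [henonMap]
    refine Prod.ext rfl ?_
    field_simp
    ring
  right_inv p := by
    obtain ⟨x, y⟩ := p
    simp only [henonMap]
    refine Prod.ext ?_ rfl
    field_simp
    ring

/-- `K_{a,b}`: the set of points of `ℂ²` whose full orbit under `f_{a,b}` is bounded. -/
def henonK (a b : ℂ) (hb : b ≠ 0) : Set (ℂ × ℂ) :=
  {p | Bornology.IsBounded (Set.range fun n : ℤ => ((henon a b hb) ^ n) p)}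

end

open Polynomial

noncomputable def hW (a b : ℂ) : ℕ → Polynomial (Polynomial ℂ)
  | 0 => X
  | 1 => C X
  | n+2 => (hW a b (n+1))^2 + C (C a) - C (C b) * hW a b n

lemma hW_succ_succ (a b : ℂ) (n : ℕ) :
    hW a b (n+2) = (hW a b (n+1))^2 + C (C a) - C (C b) * hW a b n := rfl

noncomputable def hEv (p : ℂ × ℂ) : Polynomial (Polynomial ℂ) →+* ℂ :=
  eval₂RingHom (evalRingHom p.1) p.2

@[simp] lemma hEv_C (p : ℂ × ℂ) (q : Polynomial ℂ) : hEv p (C q) = q.eval p.1 := by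
  simp [hEv]

@[simp] lemma hEv_X (p : ℂ × ℂ) : hEv p X = p.2 := by simp [hEv]

lemma hEv_W (a b : ℂ) (p : ℂ × ℂ) : ∀ n : ℕ,
    (henonMap a b)^[n] p = (hEv p (hW a b (n+1)), hEv p (hW a b n))
  | 0 => by simp [hW]
  | n+1 => by
    rw [Function.iterate_succ_apply', hEv_W a b p n]
    show henonMap a b _ = _
    rw [henonMap]
    refine Prod.ext ?_ rfl
    rw [hW_succ_succ]
    simp

lemma hAux {u w : Polynomial (Polynomial ℂ)} {d : ℕ}
    (hu : u.natDegree = d) (hw : w.natDegree < 2*d) :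
    (u^2 + w).natDegree = 2*d ∧ (u^2 + w).leadingCoeff = u.leadingCoeff^2 := by
  have h2 : (u^2).natDegree = 2*d := by rw [natDegree_pow, hu]
  have hlt : w.natDegree < (u^2).natDegree := by rw [h2]; exact hw
  constructor
  · rw [natDegree_add_eq_left_of_natDegree_lt hlt, h2]
  · rw [add_comm, leadingCoeff_add_of_degree_lt (degree_lt_degree hlt), leadingCoeff_pow]

lemma hW_deg (a b : ℂ) (hb : b ≠ 0) : ∀ n : ℕ,
    (hW a b (n+2)).natDegree = 2^n ∧ (hW a b (n+2)).leadingCoeff = C ((-b)^(2^n))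
  | 0 => by
    have e : hW a b 2 = C (-(C b)) * X + C ((X:Polynomial ℂ)^2 + C a) := by
      rw [hW_succ_succ]; simp [hW]; ring
    have hb' : -(C b : Polynomial ℂ) ≠ 0 := by simpa using hb
    rw [e]
    constructor
    · rw [natDegree_linear hb']; norm_num
    · rw [leadingCoeff_linear hb']
      simp
  | 1 => by
    obtain ⟨h1, h2⟩ := hW_deg a b hb 0
    have e : hW a b 3 = (hW a b 2)^2 + (C (C a) - C (C b) * C X) := by
      rw [hW_succ_succ]; simp [hW]; ring
    have hw : (C (C a) - C (C b) * (C X : Polynomial (Polynomial ℂ))).natDegree < 2*1 := by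
      calc (C (C a) - C (C b) * (C X : Polynomial (Polynomial ℂ))).natDegree
          = (C ((C a) - (C b) * X) : Polynomial (Polynomial ℂ)).natDegree := by
            rw [map_sub, map_mul]
        _ = 0 := natDegree_C _
        _ < 2*1 := by norm_num
    have h := hAux (d := 1) (by simpa using h1) hw
    rw [e]
    refine ⟨by simpa using h.1, ?_⟩
    rw [h.2, h2]
    rw [← map_pow]
    norm_num
  | n+2 => by
    obtain ⟨h1, h2⟩ := hW_deg a b hb (n+1)
    obtain ⟨h3, _⟩ := hW_deg a b hb n
    have e : hW a b (n+2+2) = (hW a b (n+2+1))^2 + (C (C a) - C (C b) * hW a b (n+2)) := by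
      rw [hW_succ_succ]; ring
    have h1' : (hW a b (n+2+1)).natDegree = 2^(n+1) := by
      rw [show n+2+1 = n+1+2 from rfl]; exact h1
    have hw : (C (C a) - C (C b) * hW a b (n+2)).natDegree < 2*2^(n+1) := by
      have hle : (C (C b) * hW a b (n+2)).natDegree ≤ 2^n := by
        calc (C (C b) * hW a b (n+2)).natDegree
            ≤ (C (C b) : Polynomial (Polynomial ℂ)).natDegree + (hW a b (n+2)).natDegree :=
              natDegree_mul_le
          _ = 2^n := by rw [natDegree_C, h3, zero_add]
      have hsub : (C (C a) - C (C b) * hW a b (n+2)).natDegree ≤ 2^n := by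
        refine le_trans (natDegree_sub_le _ _) ?_
        simp [natDegree_C, hle]
      calc (C (C a) - C (C b) * hW a b (n+2)).natDegree ≤ 2^n := hsub
        _ < 2*2^(n+1) := by
            have h4 : (2:ℕ)^n < 2^(n+2) := Nat.pow_lt_pow_right one_lt_two (by omega)
            calc (2:ℕ)^n < 2^(n+2) := h4
              _ = 2*2^(n+1) := by ring
    have h := hAux (d := 2^(n+1)) h1' hw
    rw [e]
    constructor
    · rw [h.1]; ring
    · rw [h.2]
      rw [show (hW a b (n+2+1)).leadingCoeff = C ((-b)^(2^(n+1))) from by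
        rw [show n+2+1 = n+1+2 from rfl]; exact h2]
      rw [← map_pow, ← pow_mul]
      norm_num [pow_succ, mul_comm]

lemma henon_bnd (a b : ℂ) (N : ℕ) (hN : 1 ≤ N) (p : ℂ × ℂ)
    (hp : (henonMap a b)^[N] p = p) :
    ‖p.1‖ ≤ 1 + ‖a‖ + ‖b‖ := by
  set f := henonMap a b with hf
  set x : ℕ → ℂ := fun k => (f^[k] p).1 with hx
  have hxrec : ∀ j : ℕ, x (j+2) = (x (j+1))^2 + a - b * x j := by
    intro j
    show (f^[j+2] p).1 = _
    simp only [hx]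
    rw [Function.iterate_succ_apply' f (j+1), Function.iterate_succ_apply' f j]
    rfl
  have hper : ∀ k, x (k + N) = x k := by
    intro k
    show (f^[k+N] p).1 = _
    rw [Function.iterate_add_apply, hp]
  have hperm : ∀ q k, x (k + q*N) = x k := by
    intro q
    induction q with
    | zero => simp
    | succ q ih =>
      intro k
      have e : k + (q+1)*N = (k + q*N) + N := by ring
      rw [e, hper, ih]
  have hne : (Finset.range N).Nonempty := ⟨0, Finset.mem_range.mpr hN⟩
  set M := Finset.sup' (Finset.range N) hne (fun k => ‖x k‖) with hM
  have hxM : ∀ k, ‖x k‖ ≤ M := by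
    intro k
    have h1 : x k = x (k % N) := by
      conv_lhs => rw [show k = k % N + (k/N)*N from (Nat.mod_add_div' k N).symm]
      rw [hperm]
    rw [h1]
    exact Finset.le_sup' (fun k => ‖x k‖) (Finset.mem_range.mpr (Nat.mod_lt k hN))
  obtain ⟨k₀, hk₀mem, hk₀⟩ := Finset.exists_mem_eq_sup' hne (fun k => ‖x k‖)
  have hxk : ‖x (k₀+N)‖ = M := by rw [hper]; exact hk₀.symm
  have h1 : x (k₀+N+1) = (x (k₀+N))^2 + a - b * x (k₀+N-1) := by
    obtain ⟨j, hj⟩ : ∃ j, k₀ + N = j + 1 := ⟨k₀+N-1, by omega⟩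
    rw [hj, show j+1-1 = j from rfl]
    exact hxrec j
  have hM2 : M^2 ≤ M + ‖a‖ + ‖b‖ * M := by
    calc M^2 = ‖(x (k₀+N))^2‖ := by rw [norm_pow, hxk]
      _ = ‖x (k₀+N+1) - a + b * x (k₀+N-1)‖ := by rw [h1]; ring_nf
      _ ≤ ‖x (k₀+N+1) - a‖ + ‖b * x (k₀+N-1)‖ :=
          norm_add_le _ _
      _ ≤ (‖x (k₀+N+1)‖ + ‖a‖) + ‖b‖ * ‖x (k₀+N-1)‖ := by
          rw [norm_mul]
          have h' : ‖x (k₀+N+1) - a‖ ≤ ‖x (k₀+N+1)‖ + ‖a‖ := by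
            exact norm_sub_le (x (k₀+N+1)) a
          exact add_le_add_left h' _
      _ ≤ (M + ‖a‖) + ‖b‖ * M := by
          gcongr
          · exact hxM _
          · exact hxM _
      _ = M + ‖a‖ + ‖b‖ * M := by ring
  have hp1M : ‖p.1‖ ≤ M := hxM 0
  have hM0 : 0 ≤ M := le_trans (norm_nonneg _) (hxM 0)
  have ha0 : 0 ≤ ‖a‖ := norm_nonneg a
  have hb0 : 0 ≤ ‖b‖ := norm_nonneg b
  rcases le_or_gt M 1 with h | h
  · linarith
  · nlinarith [mul_nonneg ha0 (sub_nonneg.mpr h.le)]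

lemma henon_aux (a b : ℂ) (hb : b ≠ 0) (N : ℕ) (hN : 1 ≤ N) :
    {p : ℂ × ℂ | (henonMap a b)^[N] p = p}.Finite := by
  classical
  set K := FractionRing (Polynomial ℂ) with hK
  set φ : Polynomial (Polynomial ℂ) →+* Polynomial K :=
    Polynomial.mapRingHom (algebraMap (Polynomial ℂ) K) with hφ
  have hKinj : Function.Injective (algebraMap (Polynomial ℂ) K) :=
    IsFractionRing.injective _ _
  have hφinj : Function.Injective φ := Polynomial.map_injective _ hKinj
  set C1 := hW a b N - (X : Polynomial (Polynomial ℂ)) with hC1def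
  set C2 := hW a b (N+1) - C (X : Polynomial ℂ) with hC2def
  -- membership characterization
  have hmem : ∀ p : ℂ × ℂ, (henonMap a b)^[N] p = p ↔ (hEv p C1 = 0 ∧ hEv p C2 = 0) := by
    intro p
    rw [show ((henonMap a b)^[N] p = p) ↔
        ((hEv p (hW a b (N+1)), hEv p (hW a b N)) = p) from by rw [hEv_W a b p N]]
    rw [Prod.ext_iff]
    simp only [hC1def, hC2def, map_sub, hEv_C, hEv_X, eval_X, sub_eq_zero]
    tauto
  -- degree facts
  have hNe : N - 1 + 2 = N + 1 := by omega
  have hdeg : (hW a b (N+1)).natDegree = 2^(N-1) ∧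
      (hW a b (N+1)).leadingCoeff = C ((-b)^(2^(N-1))) := by
    have h := hW_deg a b hb (N-1)
    rwa [hNe] at h
  have hDpos : 0 < 2^(N-1) := by positivity
  have hC2coeff : C2.coeff (2^(N-1)) = C ((-b)^(2^(N-1))) := by
    rw [hC2def, coeff_sub, coeff_C, if_neg (by omega : ¬ (2:ℕ)^(N-1) = 0), sub_zero]
    conv_lhs => rw [← hdeg.1]
    rw [coeff_natDegree, hdeg.2]
  have hbD : ((-b)^(2^(N-1)) : ℂ) ≠ 0 := pow_ne_zero _ (neg_ne_zero.mpr hb)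
  have hC2ne : C2 ≠ 0 := by
    intro h
    apply hbD
    have h2 := hC2coeff
    rw [h, coeff_zero] at h2
    exact_mod_cast (Polynomial.C_eq_zero.mp h2.symm)
  have hfib : ∀ t₀ : ℂ, C2.map (evalRingHom t₀) ≠ 0 := by
    intro t₀ h
    apply hbD
    have h2 : (C2.map (evalRingHom t₀)).coeff (2^(N-1)) = (-b)^(2^(N-1)) := by
      rw [coeff_map, hC2coeff]; simp
    rw [h, coeff_zero] at h2
    exact h2.symm
  have hEv_eq : ∀ (p : ℂ × ℂ) (Q : Polynomial (Polynomial ℂ)),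
      hEv p Q = (Q.map (evalRingHom p.1)).eval p.2 := by
    intro p Q; rw [eval_map]; rfl
  have smul_eq : ∀ (r : Polynomial ℂ) (q : Polynomial K),
      r • q = C (algebraMap (Polynomial ℂ) K r) * q := by
    intro r q
    rw [← algebraMap_smul K r q, Polynomial.smul_eq_C_mul]
  -- generic finiteness given an eliminating polynomial
  have main : ∀ d : Polynomial ℂ, d ≠ 0 →
      (∀ p : ℂ × ℂ, (henonMap a b)^[N] p = p → d.eval p.1 = 0) →
      {p : ℂ × ℂ | (henonMap a b)^[N] p = p}.Finite := by
    intro d hd hroot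
    have hsub : {p : ℂ × ℂ | (henonMap a b)^[N] p = p} ⊆
        ⋃ t₀ ∈ (d.roots.toFinset : Set ℂ),
          ({t₀} ×ˢ {s : ℂ | (C2.map (evalRingHom t₀)).IsRoot s}) := by
      intro p hp
      simp only [Set.mem_setOf_eq] at hp
      have h1 : d.eval p.1 = 0 := hroot p hp
      have h2 : hEv p C2 = 0 := ((hmem p).mp hp).2
      rw [Set.mem_iUnion₂]
      refine ⟨p.1, ?_, ?_⟩
      · simp only [Finset.coe_sort_coe, Finset.mem_coe, Multiset.mem_toFinset]
        exact mem_roots'.mpr ⟨hd, h1⟩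
      · refine Set.mem_prod.mpr ⟨rfl, ?_⟩
        show (C2.map (evalRingHom p.1)).IsRoot p.2
        rw [IsRoot, ← hEv_eq]
        exact h2
    refine Set.Finite.subset ?_ hsub
    refine Set.Finite.biUnion (Finset.finite_toSet _) (fun t₀ _ => ?_)
    exact (Set.finite_singleton t₀).prod (finite_setOf_isRoot (hfib t₀))
  by_cases hcop : IsCoprime (φ C1) (φ C2)
  · -- coprime case: Bezout + clearing denominators
    obtain ⟨u, v, huv⟩ := hcop
    obtain ⟨du, hdu⟩ :=
      IsLocalization.integerNormalization_map_to_map (nonZeroDivisors (Polynomial ℂ)) u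
    obtain ⟨dv, hdv⟩ :=
      IsLocalization.integerNormalization_map_to_map (nonZeroDivisors (Polynomial ℂ)) v
    set U := IsLocalization.integerNormalization (nonZeroDivisors (Polynomial ℂ)) u with hU
    set V := IsLocalization.integerNormalization (nonZeroDivisors (Polynomial ℂ)) v with hV
    have key : C (↑dv : Polynomial ℂ) * U * C1 + C (↑du : Polynomial ℂ) * V * C2
        = C ((↑du : Polynomial ℂ) * ↑dv) := by
      apply hφinj
      have h1 : φ (C (↑dv : Polynomial ℂ) * U * C1 + C (↑du : Polynomial ℂ) * V * C2)
          = C (algebraMap (Polynomial ℂ) K ↑dv) * ((↑du : Polynomial ℂ) • u) * φ C1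
            + C (algebraMap (Polynomial ℂ) K ↑du) * ((↑dv : Polynomial ℂ) • v) * φ C2 := by
        simp only [hφ, coe_mapRingHom, Polynomial.map_add, Polynomial.map_mul, Polynomial.map_C]
        rw [← hdu, ← hdv]
      have h2 : φ (C ((↑du : Polynomial ℂ) * ↑dv))
          = C (algebraMap (Polynomial ℂ) K ↑du) * C (algebraMap (Polynomial ℂ) K ↑dv) := by
        simp [hφ, coe_mapRingHom, map_mul]
      rw [h1, h2, smul_eq, smul_eq]
      linear_combination (C (algebraMap (Polynomial ℂ) K ↑du)
        * C (algebraMap (Polynomial ℂ) K ↑dv)) * huv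
    refine main ((↑du : Polynomial ℂ) * ↑dv)
      (mul_ne_zero (nonZeroDivisors.coe_ne_zero du) (nonZeroDivisors.coe_ne_zero dv)) ?_
    intro p hp
    obtain ⟨h1, h2⟩ := (hmem p).mp hp
    have hkey := congrArg (hEv p) key
    simp only [map_add, map_mul, h1, h2, mul_zero, add_zero, hEv_C] at hkey
    rw [eval_mul]
    exact hkey.symm
  · -- non-coprime case: common factor, contradiction with boundedness
    exfalso
    set g := EuclideanDomain.gcd (φ C1) (φ C2) with hg
    have hgC1 : g ∣ φ C1 := EuclideanDomain.gcd_dvd_left _ _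
    have hgC2 : g ∣ φ C2 := EuclideanDomain.gcd_dvd_right _ _
    have hφC2ne : φ C2 ≠ 0 := by
      intro h
      exact hC2ne (hφinj (by rw [h, map_zero]))
    have hgne : g ≠ 0 := by
      intro h
      exact hφC2ne (EuclideanDomain.gcd_eq_zero_iff.mp h).2
    have hgdeg : 0 < g.natDegree := by
      rcases Nat.eq_zero_or_pos g.natDegree with h | h
      · exfalso
        apply hcop
        have hu : IsUnit g := by
          rw [Polynomial.isUnit_iff_degree_eq_zero, degree_eq_natDegree hgne, h]
          rfl
        exact EuclideanDomain.gcd_isUnit_iff.mp hu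
      · exact h
    obtain ⟨h₁, hh₁⟩ := hgC1
    obtain ⟨h₂, hh₂⟩ := hgC2
    obtain ⟨dg, hdg⟩ :=
      IsLocalization.integerNormalization_map_to_map (nonZeroDivisors (Polynomial ℂ)) g
    obtain ⟨d1, hd1⟩ :=
      IsLocalization.integerNormalization_map_to_map (nonZeroDivisors (Polynomial ℂ)) h₁
    obtain ⟨d2, hd2⟩ :=
      IsLocalization.integerNormalization_map_to_map (nonZeroDivisors (Polynomial ℂ)) h₂
    set G := IsLocalization.integerNormalization (nonZeroDivisors (Polynomial ℂ)) g with hG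
    set H₁ := IsLocalization.integerNormalization (nonZeroDivisors (Polynomial ℂ)) h₁ with hH₁
    set H₂ := IsLocalization.integerNormalization (nonZeroDivisors (Polynomial ℂ)) h₂ with hH₂
    have halgdg : algebraMap (Polynomial ℂ) K ↑dg ≠ 0 := by
      intro h
      exact nonZeroDivisors.coe_ne_zero dg (hKinj (by rw [h, map_zero]))
    have hφG : φ G = C (algebraMap (Polynomial ℂ) K ↑dg) * g := by
      rw [hφ, coe_mapRingHom, hdg, smul_eq]
    have e₁ : G * H₁ = C ((↑dg : Polynomial ℂ) * ↑d1) * C1 := by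
      apply hφinj
      have hL : φ (G * H₁) = (C (algebraMap (Polynomial ℂ) K ↑dg) * g)
          * (C (algebraMap (Polynomial ℂ) K ↑d1) * h₁) := by
        simp only [hφ, coe_mapRingHom, Polynomial.map_mul]
        rw [hdg, hd1, smul_eq, smul_eq]
      have hR : φ (C ((↑dg : Polynomial ℂ) * ↑d1) * C1)
          = C (algebraMap (Polynomial ℂ) K ↑dg * algebraMap (Polynomial ℂ) K ↑d1) * (g * h₁) := by
        simp only [hφ, coe_mapRingHom, Polynomial.map_mul, Polynomial.map_C, map_mul]
        rw [← hh₁]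
        rfl
      rw [hL, hR, map_mul]
      ring
    have e₂ : G * H₂ = C ((↑dg : Polynomial ℂ) * ↑d2) * C2 := by
      apply hφinj
      have hL : φ (G * H₂) = (C (algebraMap (Polynomial ℂ) K ↑dg) * g)
          * (C (algebraMap (Polynomial ℂ) K ↑d2) * h₂) := by
        simp only [hφ, coe_mapRingHom, Polynomial.map_mul]
        rw [hdg, hd2, smul_eq, smul_eq]
      have hR : φ (C ((↑dg : Polynomial ℂ) * ↑d2) * C2)
          = C (algebraMap (Polynomial ℂ) K ↑dg * algebraMap (Polynomial ℂ) K ↑d2) * (g * h₂) := by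
        simp only [hφ, coe_mapRingHom, Polynomial.map_mul, Polynomial.map_C, map_mul]
        rw [← hh₂]
        rfl
      rw [hL, hR, map_mul]
      ring
    -- G has positive degree
    have hGdeg : 0 < G.natDegree := by
      have h1 : G.natDegree = (φ G).natDegree := (natDegree_map_eq_of_injective hKinj G).symm
      rw [h1, hφG, natDegree_mul (by simpa using halgdg) hgne, natDegree_C, zero_add]
      exact hgdeg
    have hGne : G ≠ 0 := by
      intro h
      rw [h] at hGdeg
      simp at hGdeg
    -- choose t₀ avoiding bad set
    set Rb := 1 + ‖a‖ + ‖b‖ with hRb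
    set P := ((↑dg : Polynomial ℂ) * ↑d1) * ((↑dg : Polynomial ℂ) * ↑d2) * G.leadingCoeff with hP
    have hLne : G.leadingCoeff ≠ 0 := leadingCoeff_ne_zero.mpr hGne
    have hdgne : (↑dg : Polynomial ℂ) ≠ 0 := nonZeroDivisors.coe_ne_zero dg
    have hd1ne : (↑d1 : Polynomial ℂ) ≠ 0 := nonZeroDivisors.coe_ne_zero d1
    have hd2ne : (↑d2 : Polynomial ℂ) ≠ 0 := nonZeroDivisors.coe_ne_zero d2
    have hPne : P ≠ 0 :=
      mul_ne_zero (mul_ne_zero (mul_ne_zero hdgne hd1ne) (mul_ne_zero hdgne hd2ne)) hLne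
    have hbad : Bornology.IsBounded
        ((P.roots.toFinset : Set ℂ) ∪ {z : ℂ | ‖z‖ ≤ Rb}) := by
      refine Bornology.IsBounded.union ?_ ?_
      · exact (Finset.finite_toSet _).isBounded
      · have hset : {z : ℂ | ‖z‖ ≤ Rb} = Metric.closedBall 0 Rb := by
          ext z
          simp [Metric.mem_closedBall, Complex.dist_eq]
        rw [hset]
        exact Metric.isBounded_closedBall
    obtain ⟨R', hR'⟩ := hbad.subset_closedBall 0
    obtain ⟨t₀, ht₀⟩ := NormedField.exists_lt_norm ℂ R'
    have ht₀bad : t₀ ∉ (P.roots.toFinset : Set ℂ) ∪ {z : ℂ | ‖z‖ ≤ Rb} := by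
      intro h
      have h2 := hR' h
      rw [Metric.mem_closedBall, Complex.dist_eq, sub_zero] at h2
      linarith
    have hPt : P.eval t₀ ≠ 0 := by
      intro h
      exact ht₀bad (Or.inl (Finset.mem_coe.mpr (Multiset.mem_toFinset.mpr
        (mem_roots'.mpr ⟨hPne, h⟩))))
    have htR : ¬ (‖t₀‖ ≤ Rb) := fun h => ht₀bad (Or.inr h)
    have he1 : ((↑dg : Polynomial ℂ) * ↑d1).eval t₀ ≠ 0 := by
      intro h
      exact hPt (by rw [hP]; simp [eval_mul, h])
    have he2 : ((↑dg : Polynomial ℂ) * ↑d2).eval t₀ ≠ 0 := by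
      intro h
      exact hPt (by rw [hP]; simp [eval_mul, h])
    have heL : (G.leadingCoeff).eval t₀ ≠ 0 := by
      intro h
      exact hPt (by rw [hP]; simp [eval_mul, h])
    set q := G.map (evalRingHom t₀) with hq
    have hqc : q.coeff G.natDegree ≠ 0 := by
      rw [hq, coeff_map, coeff_natDegree]
      simpa using heL
    have hqdeg : 0 < q.degree := by
      have h1 : (G.natDegree : WithBot ℕ) ≤ q.degree := le_degree_of_ne_zero hqc
      have h2 : (0 : WithBot ℕ) < (G.natDegree : WithBot ℕ) := by exact_mod_cast hGdeg
      exact lt_of_lt_of_le h2 h1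
    obtain ⟨s₀, hs₀⟩ := Complex.exists_root hqdeg
    set p := (t₀, s₀) with hpdef
    have hGz : hEv p G = 0 := by
      rw [hEv_eq]
      exact hs₀
    have hc1 : hEv p C1 = 0 := by
      have h := congrArg (hEv p) e₁
      simp only [map_mul, hGz, zero_mul, hEv_C] at h
      rcases mul_eq_zero.mp h.symm with h' | h'
      · exact absurd h' (by simpa using he1)
      · exact h'
    have hc2 : hEv p C2 = 0 := by
      have h := congrArg (hEv p) e₂
      simp only [map_mul, hGz, zero_mul, hEv_C] at h
      rcases mul_eq_zero.mp h.symm with h' | h'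
      · exact absurd h' (by simpa using he2)
      · exact h'
    have hper : (henonMap a b)^[N] p = p := (hmem p).mpr ⟨hc1, hc2⟩
    have hbnd := henon_bnd a b N hN p hper
    exact htR (by simpa using hbnd)

/-- For `b ≠ 0` and `N ≥ 1`, the set of periodic points of the Hénon map whose
period divides `N` is finite. -/
theorem henon_periodic_points_finite (a b : ℂ) (hb : b ≠ 0) (N : ℕ) (hN : 1 ≤ N) :
    {p : ℂ × ℂ | ((henon a b hb) ^ (N : ℤ)) p = p}.Finite := by
  refine (henon_aux a b hb N hN).subset ?_
  intro p hp
  simp only [Set.mem_setOf_eq] at *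
  have h : ((henon a b hb) ^ (N : ℤ)) p = (henonMap a b)^[N] p := by
    rw [zpow_natCast, ← Equiv.Perm.iterate_eq_pow]
    rfl
  rw [← h]
  exact hp
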